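/- If H is a 2k-uniform hypergraph on n vertices with no copy of C^(2k)_3, then the number of edges of H is at most binom(n,k)^2 / (2 * binom(2k,k)); in particular the Turán density of C^(2k)_3 is at most 1/2. -/
import Mathlib

open Finset

/-- a 2k-uniform hypergraph on `n` vertices with no copy of `C^(2k)_3` has
at most `binom(n,k)^2 / (2 * binom(2k,k))` edges. -/
theorem stmt_4 {V : Type*} [Fintype V] [DecidableEq V] (k : ℕ) (hk : 0 < k)
    (H : Finset (Finset V)) (hH : ∀ e ∈ H, e.card = 2 * k)
    (hfree : ¬ ∃ P1 P2 P3 : Finset V,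
      P1.card = k ∧ P2.card = k ∧ P3.card = k ∧
      Disjoint P1 P2 ∧ Disjoint P1 P3 ∧ Disjoint P2 P3 ∧
      (P1 ∪ P2) ∈ H ∧ (P1 ∪ P3) ∈ H ∧ (P2 ∪ P3) ∈ H) :
    (H.card : ℝ) ≤ ((Fintype.card V).choose k : ℝ) ^ 2 / (2 * ((2 * k).choose k)) := by
  classical
  set A := {s : Finset V // s.card = k} with hA
  let R : A → A → Prop := fun a b => Disjoint a.1 b.1 ∧ a.1 ∪ b.1 ∈ H
  have hRsymm : ∀ a b, R a b ↔ R b a := by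
    intro a b
    constructor <;> rintro ⟨h1, h2⟩ <;> exact ⟨h1.symm, by rwa [Finset.union_comm]⟩
  have hRtri : ∀ a b c : A, R a b → R a c → R b c → False := by
    rintro a b c ⟨hab, hab'⟩ ⟨hac, hac'⟩ ⟨hbc, hbc'⟩
    exact hfree ⟨a.1, b.1, c.1, a.2, b.2, c.2, hab, hac, hbc, hab', hac', hbc'⟩
  let d : A → ℕ := fun a => #(univ.filter (fun b => R a b))
  set N := Fintype.card A with hN
  set T := ∑ a : A, d a with hT
  -- disjoint neighborhoods
  have hnb : ∀ a b : A, R a b → d a + d b ≤ N := by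
    intro a b hab
    have hdisj : Disjoint (univ.filter (fun c => R a c)) (univ.filter (fun c => R b c)) := by
      rw [Finset.disjoint_left]
      intro c hc hc'
      simp only [mem_filter] at hc hc'
      exact hRtri a b c hab hc.2 hc'.2
    calc d a + d b = #(univ.filter (fun c => R a c) ∪ univ.filter (fun c => R b c)) :=
          (card_union_of_disjoint hdisj).symm
      _ ≤ #(univ : Finset A) := card_le_card (subset_univ _)
      _ = N := by rw [hN, Fintype.card]
  -- key inequality 1
  have key1 : 2 * ∑ a : A, d a ^ 2 ≤ N * T := by
    have h2 : ∑ a : A, ∑ b ∈ univ.filter (fun b => R a b), (d a + d b)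
        = 2 * ∑ a : A, d a ^ 2 := by
      rw [two_mul]
      have e1 : ∀ a : A, ∑ b ∈ univ.filter (fun b => R a b), (d a + d b)
          = d a * d a + ∑ b ∈ univ.filter (fun b => R a b), d b := by
        intro a
        rw [Finset.sum_add_distrib, Finset.sum_const, smul_eq_mul]
      simp only [e1]
      rw [Finset.sum_add_distrib]
      congr 1
      · exact Finset.sum_congr rfl (fun a _ => (sq (d a)).symm)
      · -- swap the double sum
        have e2 : ∑ a : A, ∑ b ∈ univ.filter (fun b => R a b), d b
            = ∑ a : A, ∑ b : A, if R a b then d b else 0 := by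
          refine Finset.sum_congr rfl (fun a _ => ?_)
          rw [Finset.sum_filter]
        rw [e2, Finset.sum_comm]
        refine Finset.sum_congr rfl (fun b _ => ?_)
        have : ∑ a : A, (if R a b then d b else 0)
            = ∑ a ∈ univ.filter (fun a => R b a), d b := by
          rw [Finset.sum_filter]
          refine Finset.sum_congr rfl (fun a _ => ?_)
          simp [hRsymm a b]
        rw [this, Finset.sum_const, smul_eq_mul]
        have : #(univ.filter fun a => R b a) = d b := rfl
        rw [this, sq]
    have h1 : ∑ a : A, ∑ b ∈ univ.filter (fun b => R a b), (d a + d b)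
        ≤ ∑ a : A, d a * N := by
      refine Finset.sum_le_sum (fun a _ => ?_)
      calc ∑ b ∈ univ.filter (fun b => R a b), (d a + d b)
          ≤ ∑ b ∈ univ.filter (fun b => R a b), N :=
            Finset.sum_le_sum (fun b hb => hnb a b (mem_filter.1 hb).2)
        _ = d a * N := by rw [Finset.sum_const, smul_eq_mul]
    have h3 : ∑ a : A, d a * N = N * T := by
      rw [← Finset.sum_mul, mul_comm]
    rw [← h2, ← h3]
    exact h1
  -- Cauchy-Schwarz
  have key2 : T ^ 2 ≤ N * ∑ a : A, d a ^ 2 := by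
    have h := sq_sum_le_card_mul_sum_sq (s := (univ : Finset A)) (f := d)
    rwa [Finset.card_univ] at h
  -- combine: 2 * T ≤ N ^ 2
  have hTle : 2 * T ≤ N ^ 2 := by
    rcases Nat.eq_zero_or_pos T with h0 | hpos
    · simp [h0]
    · have : 2 * T * T ≤ N ^ 2 * T := by
        calc 2 * T * T = 2 * T ^ 2 := by ring
          _ ≤ 2 * (N * ∑ a : A, d a ^ 2) := by
              exact Nat.mul_le_mul_left 2 key2
          _ = N * (2 * ∑ a : A, d a ^ 2) := by ring
          _ ≤ N * (N * T) := Nat.mul_le_mul_left N key1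
          _ = N ^ 2 * T := by ring
      exact Nat.le_of_mul_le_mul_right this hpos
  -- count T = H.card * (2k choose k)
  have hTcount : T = H.card * (2 * k).choose k := by
    have hP : T = #((univ : Finset A).sigma (fun a => univ.filter (fun b => R a b))) := by
      rw [Finset.card_sigma]
    have hS : #(H.sigma (fun e => e.powersetCard k)) = H.card * (2 * k).choose k := by
      rw [Finset.card_sigma]
      rw [Finset.sum_congr rfl (fun e he => by
        rw [Finset.card_powersetCard, hH e he])]
      rw [Finset.sum_const, smul_eq_mul]
    rw [hP, ← hS]
    refine Finset.card_bij' (fun p _ => ⟨p.1.1 ∪ p.2.1, p.1.1⟩)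
      (fun q hq => ⟨⟨q.2, ?_⟩, ⟨q.1 \ q.2, ?_⟩⟩) ?_ ?_ ?_ ?_
    · have := Finset.mem_sigma.1 hq
      exact (Finset.mem_powersetCard.1 this.2).2
    · have := Finset.mem_sigma.1 hq
      have hsub := (Finset.mem_powersetCard.1 this.2).1
      have hcard := (Finset.mem_powersetCard.1 this.2).2
      rw [Finset.card_sdiff_of_subset hsub, hH _ this.1, hcard]
      omega
    · rintro ⟨a, b⟩ hp
      have hb := (Finset.mem_filter.1 (Finset.mem_sigma.1 hp).2).2
      refine Finset.mem_sigma.2 ⟨hb.2, Finset.mem_powersetCard.2 ⟨Finset.subset_union_left, a.2⟩⟩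
    · rintro ⟨e, s⟩ hq
      have hmem := Finset.mem_sigma.1 hq
      have hsub := (Finset.mem_powersetCard.1 hmem.2).1
      refine Finset.mem_sigma.2 ⟨Finset.mem_univ _, Finset.mem_filter.2 ⟨Finset.mem_univ _, ?_, ?_⟩⟩
      · exact Finset.disjoint_sdiff
      · rw [Finset.union_sdiff_of_subset hsub]; exact hmem.1
    · rintro ⟨a, b⟩ hp
      have hb := (Finset.mem_filter.1 (Finset.mem_sigma.1 hp).2).2
      refine Sigma.ext ?_ (heq_of_eq ?_)
      · exact Subtype.ext rfl
      · exact Subtype.ext (Finset.union_sdiff_cancel_left hb.1)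
    · rintro ⟨e, s⟩ hq
      have hmem := Finset.mem_sigma.1 hq
      have hsub := (Finset.mem_powersetCard.1 hmem.2).1
      refine Sigma.ext ?_ (heq_of_eq rfl)
      · exact Finset.union_sdiff_of_subset hsub
  -- finish
  have hNval : N = (Fintype.card V).choose k := Fintype.card_finset_len k
  have hfinal : 2 * (H.card * (2 * k).choose k) ≤ ((Fintype.card V).choose k) ^ 2 := by
    rw [← hTcount, ← hNval]
    exact hTle
  have hCpos : 0 < (2 * k).choose k := Nat.choose_pos (by omega)
  rw [le_div_iff₀ (by positivity)]
  have : ((2 : ℝ) * (H.card * (2 * k).choose k)) ≤ (((Fintype.card V).choose k : ℝ)) ^ 2 := by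
    exact_mod_cast hfinal
  nlinarith [this]
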